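/- Let 0 < δ < 1, C > 0 and T > 0. Suppose F : (0, T] → [0, ∞) is differentiable, lim_{t→0⁺} F(t) = 0, and F′(t) ≤ C( t^{−(1+δ)/2} + t^{−δ} + 2 t^{−(1+δ)/2} F(t) ) for all t ∈ (0, T]. Then, with c = 4C/(1−δ), one has e^{−c t^{(1−δ)/2}} F(t) ≤ (C/(1−δ)) ( 2 t^{(1−δ)/2} + t^{1−δ} ) for all t ∈ (0, T]; in particular F(t) → 0 as t → 0⁺ at rate O(t^{(1−δ)/2}). -/

import Mathlib

open Filter

/-- differential inequality step of Lemma 4.4: if `F ≥ 0` is differentiable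
on `(0,T]` with `F(t) → 0` as `t → 0⁺` and
`F′(t) ≤ C(t^{−(1+δ)/2} + t^{−δ} + 2 t^{−(1+δ)/2} F(t))`, then with `c = 4C/(1−δ)`,
`e^{−c t^{(1−δ)/2}} F(t) ≤ (C/(1−δ))(2 t^{(1−δ)/2} + t^{1−δ})` on `(0,T]`. -/
theorem stmt_12 (δ C T : ℝ) (hδ0 : 0 < δ) (hδ1 : δ < 1) (hC : 0 < C) (hT : 0 < T)
    (F : ℝ → ℝ)
    (hF0 : ∀ t ∈ Set.Ioc (0 : ℝ) T, 0 ≤ F t)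
    (hdiff : ∀ t ∈ Set.Ioc (0 : ℝ) T, DifferentiableAt ℝ F t)
    (hlim : Tendsto F (nhdsWithin 0 (Set.Ioi 0)) (nhds 0))
    (hF' : ∀ t ∈ Set.Ioc (0 : ℝ) T,
      deriv F t ≤ C * (t ^ (-(1 + δ) / 2) + t ^ (-δ) + 2 * t ^ (-(1 + δ) / 2) * F t)) :
    ∀ t ∈ Set.Ioc (0 : ℝ) T,
      Real.exp (-(4 * C / (1 - δ) * t ^ ((1 - δ) / 2))) * F t ≤
        C / (1 - δ) * (2 * t ^ ((1 - δ) / 2) + t ^ (1 - δ)) := by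
  have h1δ : (0:ℝ) < 1 - δ := by linarith
  have hne : (1:ℝ) - δ ≠ 0 := h1δ.ne'
  set a : ℝ := (1 - δ) / 2 with ha
  set c : ℝ := 4 * C / (1 - δ) with hc
  have ha0 : 0 < a := by rw [ha]; linarith
  set G : ℝ → ℝ := fun s => Real.exp (-(c * s ^ a)) * F s
      - C / (1 - δ) * (2 * s ^ a + s ^ (1 - δ)) with hGdef
  -- derivative of G on Ioc 0 T
  have hG' : ∀ t ∈ Set.Ioc (0:ℝ) T, HasDerivAt G
      (Real.exp (-(c * t ^ a)) * (-(c * (a * t ^ (a - 1)))) * F t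
        + Real.exp (-(c * t ^ a)) * deriv F t
        - C / (1 - δ) * (2 * (a * t ^ (a - 1)) + (1 - δ) * t ^ (1 - δ - 1))) t := by
    intro t ht
    have ht0 : (0:ℝ) < t := ht.1
    have hpow : HasDerivAt (fun x : ℝ => x ^ a) (a * t ^ (a - 1)) t :=
      Real.hasDerivAt_rpow_const (Or.inl ht0.ne')
    have hpow2 : HasDerivAt (fun x : ℝ => x ^ (1 - δ)) ((1 - δ) * t ^ (1 - δ - 1)) t :=
      Real.hasDerivAt_rpow_const (Or.inl ht0.ne')
    have hexp : HasDerivAt (fun x : ℝ => Real.exp (-(c * x ^ a)))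
        (Real.exp (-(c * t ^ a)) * (-(c * (a * t ^ (a - 1))))) t :=
      ((hpow.const_mul c).neg).exp
    have hFd : HasDerivAt F (deriv F t) t := (hdiff t ht).hasDerivAt
    have hrhs : HasDerivAt (fun x : ℝ => C / (1 - δ) * (2 * x ^ a + x ^ (1 - δ)))
        (C / (1 - δ) * (2 * (a * t ^ (a - 1)) + (1 - δ) * t ^ (1 - δ - 1))) t :=
      ((hpow.const_mul 2).add hpow2).const_mul _
    exact (hexp.mul hFd).sub hrhs
  -- deriv G ≤ 0 on Ioo 0 T
  have hDG : ∀ x ∈ Set.Ioo (0:ℝ) T, deriv G x ≤ 0 := by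
    intro t ht
    have htT : t ∈ Set.Ioc (0:ℝ) T := ⟨ht.1, ht.2.le⟩
    rw [(hG' t htT).deriv]
    set P := t ^ (-(1 + δ) / 2) with hP
    set Q := t ^ (-δ) with hQ
    have hPn : 0 ≤ P := Real.rpow_nonneg ht.1.le _
    have hQn : 0 ≤ Q := Real.rpow_nonneg ht.1.le _
    set E := Real.exp (-(c * t ^ a)) with hE
    have hE0 : 0 < E := Real.exp_pos _
    have hE1 : E ≤ 1 := by
      have h0 : 0 ≤ c * t ^ a := by
        apply mul_nonneg
        · rw [hc]; positivity
        · exact Real.rpow_nonneg ht.1.le _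
      calc E ≤ Real.exp 0 := Real.exp_le_exp.2 (by linarith)
        _ = 1 := Real.exp_zero
    have hea : t ^ (a - 1) = P := by rw [hP, ha]; congr 1; ring
    have heb : t ^ (1 - δ - 1) = Q := by rw [hQ]; congr 1; ring
    rw [hea, heb]
    have main : E * (-(c * (a * P))) * F t + E * deriv F t
        - C / (1 - δ) * (2 * (a * P) + (1 - δ) * Q)
        = E * deriv F t - 2 * C * E * P * F t - (C * P + C * Q) := by
      rw [hc, ha]; field_simp; ring
    rw [main]
    have h1 : E * deriv F t ≤ E * (C * (P + Q + 2 * P * F t)) :=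
      mul_le_mul_of_nonneg_left (hF' t htT) hE0.le
    nlinarith [h1, mul_nonneg (mul_nonneg hC.le hPn) (sub_nonneg.2 hE1),
      mul_nonneg (mul_nonneg hC.le hQn) (sub_nonneg.2 hE1)]
  -- G antitone on Ioc 0 T
  have hanti : AntitoneOn G (Set.Ioc 0 T) := by
    apply antitoneOn_of_deriv_nonpos (convex_Ioc 0 T)
    · intro x hx
      exact ((hG' x hx).differentiableAt).continuousAt.continuousWithinAt
    · rw [interior_Ioc]
      intro x hx
      exact ((hG' x ⟨hx.1, hx.2.le⟩).differentiableAt).differentiableWithinAt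
    · rw [interior_Ioc]
      exact hDG
  -- limit of G at 0⁺
  have hpow0 : Tendsto (fun s : ℝ => s ^ a) (nhdsWithin 0 (Set.Ioi 0)) (nhds 0) := by
    have : ContinuousAt (fun s : ℝ => s ^ a) 0 :=
      Real.continuousAt_rpow_const 0 a (Or.inr ha0.le)
    have h := this.tendsto
    rw [Real.zero_rpow ha0.ne'] at h
    exact h.mono_left nhdsWithin_le_nhds
  have hpow1 : Tendsto (fun s : ℝ => s ^ (1 - δ)) (nhdsWithin 0 (Set.Ioi 0)) (nhds 0) := by
    have : ContinuousAt (fun s : ℝ => s ^ (1 - δ)) 0 :=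
      Real.continuousAt_rpow_const 0 (1 - δ) (Or.inr h1δ.le)
    have h := this.tendsto
    rw [Real.zero_rpow hne] at h
    exact h.mono_left nhdsWithin_le_nhds
  have hexp0 : Tendsto (fun s : ℝ => Real.exp (-(c * s ^ a)))
      (nhdsWithin 0 (Set.Ioi 0)) (nhds 1) := by
    have h1 : Tendsto (fun s : ℝ => -(c * s ^ a)) (nhdsWithin 0 (Set.Ioi 0)) (nhds 0) := by
      simpa using (hpow0.const_mul c).neg
    have h2 := (Real.continuous_exp.tendsto 0).comp h1
    simpa [Function.comp_def] using h2
  have hGlim : Tendsto G (nhdsWithin 0 (Set.Ioi 0)) (nhds 0) := by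
    have h2 : Tendsto (fun s : ℝ => C / (1 - δ) * (2 * s ^ a + s ^ (1 - δ)))
        (nhdsWithin 0 (Set.Ioi 0)) (nhds 0) := by
      have := ((hpow0.const_mul 2).add hpow1).const_mul (C / (1 - δ))
      simpa using this
    have := (hexp0.mul hlim).sub h2
    simpa using this
  -- conclude
  intro t ht
  have hev : ∀ᶠ s in nhdsWithin 0 (Set.Ioi 0), G t ≤ G s := by
    filter_upwards [Ioc_mem_nhdsGT_of_mem (Set.left_mem_Ico.2 ht.1)] with s hs
    exact hanti ⟨hs.1, hs.2.trans ht.2⟩ ht hs.2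
  have h0 : G t ≤ 0 := ge_of_tendsto hGlim hev
  simp only [hGdef] at h0
  linarith
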